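/- The integral ∫_0^∞ ln(1 - 1/cosh x) dx equals -(3/2) ∫_0^∞ x/sinh(x) dx. -/

import Mathlib

open Real MeasureTheory Set Filter

noncomputable def Lf (x : ℝ) : ℝ := Real.log (Real.sinh x) - Real.log (Real.cosh x)

lemma sinh_pos' {x : ℝ} (hx : 0 < x) : 0 < Real.sinh x := Real.sinh_pos_iff.mpr hx

lemma Lf_nonpos {x : ℝ} (hx : 0 < x) : Lf x ≤ 0 := by
  have h := Real.sinh_lt_cosh (x := x)
  have h1 : Real.log (Real.sinh x) ≤ Real.log (Real.cosh x) :=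
    Real.log_le_log (sinh_pos' hx) h.le
  simpa [Lf] using sub_nonpos.mpr h1

lemma neg_log_le {t : ℝ} (ht : 0 < t) : -Real.log t ≤ (1 - t) / t := by
  have h := Real.log_le_sub_one_of_pos (inv_pos.mpr ht)
  rw [Real.log_inv] at h
  have h2 : t⁻¹ - 1 = (1 - t) / t := by field_simp
  linarith

lemma cosh_ge_half_exp (x : ℝ) : Real.exp x / 2 ≤ Real.cosh x := by
  rw [Real.cosh_eq]
  have := (Real.exp_pos (-x)).le
  linarith

lemma Lf_tail {x : ℝ} (hx : 1 ≤ x) : -Lf x ≤ 4 * Real.exp (-(2 * x)) := by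
  have hx0 : 0 < x := lt_of_lt_of_le one_pos hx
  have hs := sinh_pos' hx0
  have hc := Real.cosh_pos x
  have hE : Real.exp x * Real.exp (-x) = 1 := by rw [← Real.exp_add]; simp
  have h3 : (3 : ℝ) ≤ Real.exp (2 * x) := by
    have := Real.add_one_le_exp (2 * x); linarith
  have h2x : Real.exp (2 * x) = Real.exp x * Real.exp x := by rw [two_mul, Real.exp_add]
  have hhalf : Real.cosh x ≤ 2 * Real.sinh x := by
    rw [Real.cosh_eq, Real.sinh_eq]
    nlinarith [Real.exp_pos (-x), Real.exp_pos x]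
  set t := Real.sinh x / Real.cosh x with hts
  have ht : 0 < t := div_pos hs hc
  have ht2 : 1 / 2 ≤ t := by rw [hts, le_div_iff₀ hc]; linarith
  have ht1 : t ≤ 1 := by
    rw [hts, div_le_one hc]
    exact (Real.sinh_lt_cosh (x := x)).le
  have h1t : 1 - t = Real.exp (-x) / Real.cosh x := by
    rw [hts]
    field_simp
    rw [Real.cosh_eq, Real.sinh_eq]; ring
  have hb : 1 - t ≤ 2 * Real.exp (-(2 * x)) := by
    rw [h1t, div_le_iff₀ hc]
    have h2 := cosh_ge_half_exp x
    have he : Real.exp (-(2 * x)) * Real.exp x = Real.exp (-x) := by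
      rw [← Real.exp_add]; ring_nf
    nlinarith [Real.exp_pos (-(2 * x)), Real.exp_pos x]
  have hlog : -Lf x ≤ (1 - t) / t := by
    have hLt : Lf x = Real.log t := by
      rw [hts, Real.log_div hs.ne' hc.ne']; rfl
    rw [hLt]; exact neg_log_le ht
  have hdiv : (1 - t) / t ≤ 2 * (1 - t) := by
    rw [div_le_iff₀ ht]; nlinarith
  linarith

lemma Lf_small {x : ℝ} (hx0 : 0 < x) (hx1 : x ≤ 1) :
    -Lf x ≤ 1 + 2 * x ^ (-(1 / 2) : ℝ) := by
  have hs := sinh_pos' hx0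
  have hc := Real.cosh_pos x
  have hcoshx : Real.log (Real.cosh x) ≤ x := by
    have h1 : Real.cosh x ≤ Real.exp x := by
      rw [Real.cosh_eq]
      have : Real.exp (-x) ≤ Real.exp x := Real.exp_le_exp.mpr (by linarith)
      linarith
    calc Real.log (Real.cosh x) ≤ Real.log (Real.exp x) := Real.log_le_log hc h1
      _ = x := Real.log_exp x
  have hsinh : -Real.log (Real.sinh x) ≤ -Real.log x := by
    have : Real.log x ≤ Real.log (Real.sinh x) :=
      Real.log_le_log hx0 (Real.self_lt_sinh_iff.mpr hx0).le
    linarith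
  have hlogx : -Real.log x ≤ 2 * x ^ (-(1 / 2) : ℝ) := by
    have hr : Real.log (x ^ (-(1 / 2) : ℝ)) = (-(1 / 2) : ℝ) * Real.log x :=
      Real.log_rpow hx0 _
    have h2 : Real.log (x ^ (-(1 / 2) : ℝ)) ≤ x ^ (-(1 / 2) : ℝ) - 1 :=
      Real.log_le_sub_one_of_pos (Real.rpow_pos_of_pos hx0 _)
    nlinarith [Real.rpow_pos_of_pos hx0 (-(1 / 2) : ℝ)]
  have : -Lf x = Real.log (Real.cosh x) - Real.log (Real.sinh x) := by simp [Lf]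
  linarith

lemma Lf_contOn : ContinuousOn Lf (Ioi 0) := by
  intro x hx
  have hs := sinh_pos' (mem_Ioi.mp hx)
  have hc := Real.cosh_pos x
  exact (((Real.continuousAt_log hs.ne').comp (Real.continuous_sinh.continuousAt)).sub
    ((Real.continuousAt_log hc.ne').comp (Real.continuous_cosh.continuousAt))).continuousWithinAt

lemma Lf_int : IntegrableOn Lf (Ioi 0) := by
  rw [← Ioc_union_Ioi_eq_Ioi (zero_le_one : (0:ℝ) ≤ 1)]
  refine IntegrableOn.union ?_ ?_
  · have hb : IntegrableOn (fun x : ℝ => 1 + 2 * x ^ (-(1 / 2) : ℝ)) (Ioc (0:ℝ) 1) := by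
      have h1 : IntegrableOn (fun x : ℝ => x ^ (-(1 / 2) : ℝ)) (Ioc (0:ℝ) 1) := by
        have := intervalIntegral.intervalIntegrable_rpow' (a := 0) (b := 1) (show (-1:ℝ) < -(1/2) by norm_num)
        rwa [intervalIntegrable_iff_integrableOn_Ioc_of_le zero_le_one] at this
      exact (integrableOn_const measure_Ioc_lt_top.ne).add (h1.const_mul 2)
    refine hb.mono' ?_ ?_
    · exact ((Lf_contOn.mono Ioc_subset_Ioi_self).aestronglyMeasurable measurableSet_Ioc)
    · refine (ae_restrict_iff' measurableSet_Ioc).mpr (ae_of_all _ fun x hx => ?_)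
      have h1 := Lf_small hx.1 hx.2
      have h2 : Lf x ≤ 0 := Lf_nonpos hx.1
      have h3 : (0:ℝ) < x ^ (-(1 / 2) : ℝ) := Real.rpow_pos_of_pos hx.1 _
      rw [Real.norm_eq_abs, abs_of_nonpos h2]
      exact h1
  · have hb : IntegrableOn (fun x : ℝ => 4 * Real.exp (-(2 * x))) (Ioi (1:ℝ)) := by
      have := (exp_neg_integrableOn_Ioi (1:ℝ) (show (0:ℝ) < 2 by norm_num)).const_mul 4
      simpa [IntegrableOn] using this
    refine hb.mono' ?_ ?_
    · exact ((Lf_contOn.mono fun x (hx : x ∈ Ioi (1:ℝ)) => mem_Ioi.mpr (lt_trans one_pos (mem_Ioi.mp hx))).aestronglyMeasurable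
        measurableSet_Ioi)
    · refine (ae_restrict_iff' measurableSet_Ioi).mpr (ae_of_all _ fun x hx => ?_)
      have hx1 : (1:ℝ) < x := hx
      have h1 := Lf_tail hx1.le
      have h2 : Lf x ≤ 0 := Lf_nonpos (lt_trans one_pos hx1)
      rw [Real.norm_eq_abs, abs_of_nonpos h2]
      exact h1

lemma Jf_contOn : ContinuousOn (fun x : ℝ => x / Real.sinh x) (Ioi 0) := by
  intro x hx
  have hs := sinh_pos' (mem_Ioi.mp hx)
  exact (continuousAt_id.div Real.continuous_sinh.continuousAt hs.ne').continuousWithinAt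

lemma Jf_small {x : ℝ} (hx : 0 < x) : x / Real.sinh x ≤ 1 := by
  have hs := sinh_pos' hx
  rw [div_le_one hs]
  exact (Real.self_lt_sinh_iff.mpr hx).le

lemma Jf_tail {x : ℝ} (hx : 1 ≤ x) : x / Real.sinh x ≤ 8 * Real.exp (-(2⁻¹ * x)) := by
  have hx0 : 0 < x := lt_of_lt_of_le one_pos hx
  have hs := sinh_pos' hx0
  have hsinh4 : Real.exp x / 4 ≤ Real.sinh x := by
    rw [Real.sinh_eq]
    have h2 : (2:ℝ) ≤ Real.exp (2 * x) := by
      have := Real.add_one_le_exp (2 * x); linarith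
    have h2x : Real.exp (2 * x) = Real.exp x * Real.exp x := by rw [two_mul, Real.exp_add]
    nlinarith [Real.exp_pos (-x), Real.exp_pos x,
      (by rw [← Real.exp_add]; simp : Real.exp x * Real.exp (-x) = 1)]
  have hxe : x ≤ 2 * Real.exp (2⁻¹ * x) := by
    have := Real.add_one_le_exp (2⁻¹ * x); linarith
  rw [div_le_iff₀ hs]
  have he : Real.exp (-(2⁻¹ * x)) * Real.exp x = Real.exp (2⁻¹ * x) := by
    rw [← Real.exp_add]; ring_nf
  nlinarith [Real.exp_pos (-(2⁻¹ * x)), Real.exp_pos x, Real.exp_pos (2⁻¹ * x)]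

lemma Jf_int : IntegrableOn (fun x : ℝ => x / Real.sinh x) (Ioi 0) := by
  rw [← Ioc_union_Ioi_eq_Ioi (zero_le_one : (0:ℝ) ≤ 1)]
  refine IntegrableOn.union ?_ ?_
  · have hb : IntegrableOn (fun _ : ℝ => (1:ℝ)) (Ioc (0:ℝ) 1) volume :=
      integrableOn_const measure_Ioc_lt_top.ne
    refine hb.mono' ?_ ?_
    · exact (Jf_contOn.mono Ioc_subset_Ioi_self).aestronglyMeasurable measurableSet_Ioc
    · refine (ae_restrict_iff' measurableSet_Ioc).mpr (ae_of_all _ fun x hx => ?_)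
      have hs := sinh_pos' hx.1
      rw [Real.norm_eq_abs, abs_of_nonneg (div_nonneg hx.1.le hs.le)]
      exact Jf_small hx.1
  · have hb : IntegrableOn (fun x : ℝ => 8 * Real.exp (-(2⁻¹ * x))) (Ioi (1:ℝ)) := by
      have := (exp_neg_integrableOn_Ioi (1:ℝ) (show (0:ℝ) < 2⁻¹ by norm_num)).const_mul 8
      simpa [IntegrableOn] using this
    refine hb.mono' ?_ ?_
    · exact (Jf_contOn.mono fun x (hx : x ∈ Ioi (1:ℝ)) => mem_Ioi.mpr (lt_trans one_pos (mem_Ioi.mp hx))).aestronglyMeasurable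
        measurableSet_Ioi
    · refine (ae_restrict_iff' measurableSet_Ioi).mpr (ae_of_all _ fun x hx => ?_)
      have hx1 : (1:ℝ) < x := hx
      have hs := sinh_pos' (lt_trans one_pos hx1)
      rw [Real.norm_eq_abs, abs_of_nonneg (div_nonneg (by linarith) hs.le)]
      exact Jf_tail hx1.le

lemma G_eq {x : ℝ} : (2 * x) / Real.sinh (2 * x) = x / (Real.sinh x * Real.cosh x) := by
  rw [Real.sinh_two_mul, mul_assoc]
  exact mul_div_mul_left x _ two_ne_zero

lemma G_int : IntegrableOn (fun x : ℝ => x / (Real.sinh x * Real.cosh x)) (Ioi 0) := by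
  have h := (integrableOn_Ioi_comp_mul_left_iff (fun u : ℝ => u / Real.sinh u) 0
    (show (0:ℝ) < 2 by norm_num)).mpr (by simpa using Jf_int)
  refine h.congr_fun (fun x _ => G_eq) measurableSet_Ioi

lemma G_val : ∫ x in Ioi (0:ℝ), x / (Real.sinh x * Real.cosh x)
    = 2⁻¹ * ∫ x in Ioi (0:ℝ), x / Real.sinh x := by
  have h := integral_comp_mul_left_Ioi (fun u : ℝ => u / Real.sinh u) 0
    (show (0:ℝ) < 2 by norm_num)
  simp only [mul_zero, smul_eq_mul] at h
  rw [← h]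
  exact setIntegral_congr_fun measurableSet_Ioi fun x _ => G_eq.symm

lemma F_cont : ContinuousWithinAt (fun x : ℝ => x * Lf x) (Ici 0) 0 := by
  rw [← continuousWithinAt_Ioi_iff_Ici]
  unfold ContinuousWithinAt
  have hval : (fun x : ℝ => x * Lf x) 0 = 0 := by norm_num
  rw [hval]
  have hB : Tendsto (fun x : ℝ => x * Real.log (Real.cosh x)) (nhdsWithin 0 (Ioi 0)) (nhds 0) := by
    have hc : ContinuousAt (fun x : ℝ => x * Real.log (Real.cosh x)) 0 :=
      continuousAt_id.mul ((Real.continuousAt_log (by simp)).comp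
        Real.continuous_cosh.continuousAt)
    have := hc.tendsto
    simp only [Real.cosh_zero, Real.log_one, mul_zero, zero_mul] at this
    exact this.mono_left nhdsWithin_le_nhds
  have h0 : Tendsto (fun x : ℝ => x * Real.log x) (nhdsWithin 0 (Ioi 0)) (nhds 0) := by
    have := tendsto_log_mul_rpow_nhdsGT_zero (show (0:ℝ) < 1 by norm_num)
    simp only [Real.rpow_one] at this
    exact this.congr fun x => mul_comm _ _
  have hsq : Tendsto (fun x : ℝ => x * x) (nhdsWithin 0 (Ioi 0)) (nhds 0) := by
    have : ContinuousAt (fun x : ℝ => x * x) 0 := continuousAt_id.mul continuousAt_id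
    have h := this.tendsto
    simp only [mul_zero] at h
    exact h.mono_left nhdsWithin_le_nhds
  have hA : Tendsto (fun x : ℝ => x * Real.log (Real.sinh x)) (nhdsWithin 0 (Ioi 0)) (nhds 0) := by
    refine tendsto_of_tendsto_of_tendsto_of_le_of_le' h0 hsq ?_ ?_
    · filter_upwards [self_mem_nhdsWithin] with x hx
      have hx0 : (0:ℝ) < x := hx
      exact mul_le_mul_of_nonneg_left
        (Real.log_le_log hx0 (Real.self_lt_sinh_iff.mpr hx0).le) hx0.le
    · filter_upwards [self_mem_nhdsWithin] with x hx
      have hx0 : (0:ℝ) < x := hx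
      have h1 : Real.log (Real.sinh x) ≤ x := by
        have hcx : Real.cosh x ≤ Real.exp x := by
          rw [Real.cosh_eq]
          have : Real.exp (-x) ≤ Real.exp x := Real.exp_le_exp.mpr (by linarith)
          linarith
        calc Real.log (Real.sinh x) ≤ Real.log (Real.cosh x) :=
              Real.log_le_log (sinh_pos' hx0) (Real.sinh_lt_cosh (x := x)).le
          _ ≤ Real.log (Real.exp x) := Real.log_le_log (Real.cosh_pos x) hcx
          _ = x := Real.log_exp x
      exact mul_le_mul_of_nonneg_left h1 hx0.le
  have := hA.sub hB
  simp only [sub_zero] at this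
  exact this.congr fun x => by simp [Lf, mul_sub]

lemma F_top : Tendsto (fun x : ℝ => x * Lf x) atTop (nhds 0) := by
  have hE : Tendsto (fun x : ℝ => 4 * Real.exp (-x)) atTop (nhds 0) := by
    have := Real.tendsto_exp_neg_atTop_nhds_zero
    simpa using (this.const_mul 4)
  have hnE : Tendsto (fun x : ℝ => -(4 * Real.exp (-x))) atTop (nhds 0) := by
    simpa using hE.neg
  refine tendsto_of_tendsto_of_tendsto_of_le_of_le' hnE hE ?_ ?_
  · filter_upwards [eventually_ge_atTop (1:ℝ)] with x hx
    have hx0 : (0:ℝ) < x := lt_of_lt_of_le one_pos hx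
    have h1 := Lf_tail hx
    have hxe : x ≤ Real.exp x := by
      have := Real.add_one_le_exp x; linarith
    have he : Real.exp x * Real.exp (-(2*x)) = Real.exp (-x) := by
      rw [← Real.exp_add]; ring_nf
    have h2 : x * (-Lf x) ≤ 4 * Real.exp (-x) := by
      calc x * (-Lf x) ≤ x * (4 * Real.exp (-(2*x))) :=
            mul_le_mul_of_nonneg_left h1 hx0.le
        _ ≤ Real.exp x * (4 * Real.exp (-(2*x))) :=
            mul_le_mul_of_nonneg_right hxe (by positivity)
        _ = 4 * Real.exp (-x) := by rw [← he]; ring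
    nlinarith
  · filter_upwards [eventually_ge_atTop (1:ℝ)] with x hx
    have hx0 : (0:ℝ) < x := lt_of_lt_of_le one_pos hx
    have h2 : Lf x ≤ 0 := Lf_nonpos hx0
    have h3 : x * Lf x ≤ 0 := mul_nonpos_of_nonneg_of_nonpos hx0.le h2
    have h4 : (0:ℝ) ≤ 4 * Real.exp (-x) := by positivity
    linarith

lemma F_deriv {x : ℝ} (hx : x ∈ Ioi (0:ℝ)) :
    HasDerivAt (fun y : ℝ => y * Lf y)
      (Lf x + x / (Real.sinh x * Real.cosh x)) x := by
  have hx0 : (0:ℝ) < x := hx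
  have hs := sinh_pos' hx0
  have hc := Real.cosh_pos x
  have d1 : HasDerivAt (fun y : ℝ => Real.log (Real.sinh y))
      (Real.cosh x / Real.sinh x) x := (Real.hasDerivAt_sinh x).log hs.ne'
  have d2 : HasDerivAt (fun y : ℝ => Real.log (Real.cosh y))
      (Real.sinh x / Real.cosh x) x := (Real.hasDerivAt_cosh x).log hc.ne'
  have d : HasDerivAt (fun y : ℝ => y * Lf y)
      (1 * Lf x + x * (Real.cosh x / Real.sinh x - Real.sinh x / Real.cosh x)) x :=
    (hasDerivAt_id x).mul (d1.sub d2)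
  convert d using 1
  have hsq := Real.cosh_sq_sub_sinh_sq x
  have : Real.cosh x / Real.sinh x - Real.sinh x / Real.cosh x
      = 1 / (Real.sinh x * Real.cosh x) := by
    field_simp
    nlinarith [hsq]
  rw [this]
  field_simp

lemma IBP : (∫ x in Ioi (0:ℝ), Lf x)
    = -(2⁻¹ * ∫ x in Ioi (0:ℝ), x / Real.sinh x) := by
  have hint : IntegrableOn
      (fun x : ℝ => Lf x + x / (Real.sinh x * Real.cosh x)) (Ioi 0) := Lf_int.add G_int
  have h := integral_Ioi_of_hasDerivAt_of_tendsto F_cont (fun x hx => F_deriv hx) hint F_top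
  rw [integral_add Lf_int G_int, G_val] at h
  simp only [zero_mul, sub_zero, mul_zero] at h
  linarith

lemma key_pointwise {x : ℝ} (hx : 0 < x) :
    Real.log (1 - 1 / Real.cosh x) = Lf x + Lf (x / 2) := by
  have hu0 : 0 < x / 2 := by positivity
  have hsu := sinh_pos' hu0
  have hcu := Real.cosh_pos (x / 2)
  have hsx := sinh_pos' hx
  have hcx := Real.cosh_pos x
  have h2 : x = 2 * (x / 2) := by ring
  have hprod : 1 - 1 / Real.cosh x
      = (Real.sinh x / Real.cosh x) * (Real.sinh (x / 2) / Real.cosh (x / 2)) := by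
    rw [h2, Real.sinh_two_mul, Real.cosh_two_mul]
    have hsq := Real.cosh_sq_sub_sinh_sq (x / 2)
    have hpos : (0:ℝ) < Real.cosh (x / 2) ^ 2 + Real.sinh (x / 2) ^ 2 := by positivity
    field_simp
    linear_combination hsq
  rw [hprod, Real.log_mul (by positivity) (by positivity),
    Real.log_div hsx.ne' hcx.ne', Real.log_div hsu.ne' hcu.ne']
  rfl

lemma half_int : IntegrableOn (fun x : ℝ => Lf (x / 2)) (Ioi 0) := by
  have h := (integrableOn_Ioi_comp_mul_left_iff Lf 0
    (show (0:ℝ) < 2⁻¹ by norm_num)).mpr (by simpa using Lf_int)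
  refine h.congr_fun (fun x _ => by rw [div_eq_inv_mul]) measurableSet_Ioi

lemma half_val : (∫ x in Ioi (0:ℝ), Lf (x / 2)) = 2 * ∫ x in Ioi (0:ℝ), Lf x := by
  have h := integral_comp_mul_left_Ioi Lf 0 (show (0:ℝ) < 2⁻¹ by norm_num)
  simp only [mul_zero, smul_eq_mul, inv_inv] at h
  rw [← h]
  exact setIntegral_congr_fun measurableSet_Ioi fun x _ => by rw [div_eq_inv_mul]

theorem stmt_10 :
    (∫ x in Set.Ioi (0:ℝ), Real.log (1 - 1 / Real.cosh x))
      = -(3 / 2) * ∫ x in Set.Ioi (0:ℝ), x / Real.sinh x := by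
  have hcongr : (∫ x in Ioi (0:ℝ), Real.log (1 - 1 / Real.cosh x))
      = ∫ x in Ioi (0:ℝ), (Lf x + Lf (x / 2)) :=
    setIntegral_congr_fun measurableSet_Ioi fun x hx => key_pointwise hx
  rw [hcongr, integral_add Lf_int half_int, half_val, IBP]
  ring
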